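/- For all a ∈ ℕ and n ∈ ℕ ∪ {0}, the function f : ℕ → ℕ given by f(x) = a·x^n is continuous as a map from the Macías space M(ℕ) to itself. -/

import Mathlib

open Topology

/-- For `n` a positive natural, `σ_n = {m ∈ ℕ⁺ : gcd(n,m) = 1}`. -/
def sigmaSet (n : ℕ+) : Set ℕ+ := {m : ℕ+ | Nat.Coprime (n : ℕ) (m : ℕ)}

/-- The Macías topology `τ_M` on the positive naturals, generated by the sets `σ_n`. -/
def tauM : TopologicalSpace ℕ+ :=
  TopologicalSpace.generateFrom (Set.range sigmaSet)

theorem monomial_continuous (a : ℕ+) (n : ℕ) :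
    Continuous[tauM, tauM] (fun x : ℕ+ => a * x ^ n) := by
  rcases Nat.eq_zero_or_pos n with hn | hn
  · subst hn
    simp only [pow_zero, mul_one]
    exact @continuous_const _ _ tauM tauM _
  · refine continuous_generateFrom_iff.mpr ?_
    rintro s ⟨k, rfl⟩
    by_cases hka : Nat.Coprime (k : ℕ) (a : ℕ)
    · have : (fun x : ℕ+ => a * x ^ n) ⁻¹' sigmaSet k = sigmaSet k := by
        ext x
        simp only [Set.mem_preimage, sigmaSet, Set.mem_setOf_eq, PNat.mul_coe, PNat.pow_coe]
        constructor
        · intro h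
          have := Nat.Coprime.coprime_dvd_right (dvd_mul_left _ _) h
          exact (Nat.coprime_pow_right_iff hn _ _).mp this
        · intro h
          exact Nat.Coprime.mul_right hka (h.pow_right n)
      rw [this]
      exact TopologicalSpace.GenerateOpen.basic _ ⟨k, rfl⟩
    · have : (fun x : ℕ+ => a * x ^ n) ⁻¹' sigmaSet k = ∅ := by
        ext x
        simp only [Set.mem_preimage, sigmaSet, Set.mem_setOf_eq, PNat.mul_coe, PNat.pow_coe,
          Set.mem_empty_iff_false, iff_false]
        intro h
        exact hka (Nat.Coprime.coprime_dvd_right (dvd_mul_right _ _) h)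
      rw [this]
      exact @isOpen_empty _ tauM
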